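/- arXiv:1501.07814 — 2 statements merged into one kernel-verified Lean document; each statement's English description precedes it below -/
import Mathlib

section
/- Suppose all weighted constraints in C are user-independent. Then min over all complete plans π of w(π) = w_C(π) + w_A(π) equals min over all patterns P (partitions of S) of [ w_C(π_P) + min over injections f from the blocks of P into U of Σ_{p ∈ P} ω(p, f(p)) ], where π_P is any plan with pattern P. -/
/-- The pattern of a plan: the partition of `S` into nonempty preimage sets. -/
def pattern {S U : Type*} (π : S → U) : Set (Set S) :=
  {T | T.Nonempty ∧ ∃ u, T = π ⁻¹' {u}}

lemma pattern_key {S U : Type*} {π π' : S → U} (h : pattern π = pattern π') (s : S) :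
    π ⁻¹' {π s} = π' ⁻¹' {π' s} := by
  have h1 : π ⁻¹' {π s} ∈ pattern π := ⟨⟨s, rfl⟩, ⟨π s, rfl⟩⟩
  rw [h] at h1
  obtain ⟨-, u', hu'⟩ := h1
  have hs : s ∈ π' ⁻¹' {u'} := by rw [← hu']; exact rfl
  have : u' = π' s := (Set.mem_preimage.mp hs).symm
  rw [hu', this]

lemma exists_perm_of_pattern_eq {S U : Type*} [Fintype S] [Fintype U]
    {π π' : S → U} (h : pattern π = pattern π') :
    ∃ θ : Equiv.Perm U, π' = θ ∘ π := by
  classical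
  have key : ∀ s t : S, π s = π t ↔ π' s = π' t := by
    intro s t
    constructor
    · intro hst
      have : t ∈ π ⁻¹' {π s} := by simp [hst]
      rw [pattern_key h s] at this
      exact (Set.mem_preimage.mp this).symm
    · intro hst
      have : t ∈ π' ⁻¹' {π' s} := by simp [hst]
      rw [← pattern_key h s] at this
      exact (Set.mem_preimage.mp this).symm
  -- build equiv between ranges
  let g : {u // u ∈ Set.range π} → {u // u ∈ Set.range π'} :=
    fun x => ⟨π' (Classical.choose x.2), Set.mem_range_self _⟩
  have hg : ∀ (x : {u // u ∈ Set.range π}), π (Classical.choose x.2) = x.1 :=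
    fun x => Classical.choose_spec x.2
  have hginj : Function.Injective g := by
    intro x y hxy
    have : π' (Classical.choose x.2) = π' (Classical.choose y.2) :=
      congrArg Subtype.val hxy
    have := (key _ _).mpr this
    rw [hg x, hg y] at this
    exact Subtype.ext this
  have hgsurj : Function.Surjective g := by
    rintro ⟨u', t, rfl⟩
    refine ⟨⟨π t, Set.mem_range_self _⟩, ?_⟩
    apply Subtype.ext
    show π' (Classical.choose _) = π' t
    exact (key _ _).mp (hg ⟨π t, Set.mem_range_self _⟩)
  let e : {u // u ∈ Set.range π} ≃ {u // u ∈ Set.range π'} :=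
    Equiv.ofBijective g ⟨hginj, hgsurj⟩
  refine ⟨e.extendSubtype, ?_⟩
  funext s
  have hm : π s ∈ Set.range π := Set.mem_range_self s
  have := e.extendSubtype_apply_of_mem (π s) hm
  simp only [Function.comp_apply]
  rw [this]
  show π' s = π' (Classical.choose _)
  exact (key _ _).mp (hg ⟨π s, hm⟩).symm

/-- with user-independent weighted constraints, the minimum total
weight over all complete plans equals the minimum, over all patterns, of the
constraint weight of the pattern plus the minimum authorisation weight over
plans with that pattern. -/
theorem min_weight_eq_min_over_patterns {S U : Type*} [Fintype S] [Fintype U]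
    [DecidableEq S] [DecidableEq U]
    (hcard : Fintype.card S ≤ Fintype.card U)
    (wC : (S → U) → ℕ)
    (hUI : ∀ (θ : Equiv.Perm U) (π : S → U), wC (θ ∘ π) = wC π)
    (ω : Finset S → U → ℕ) (hω : ∀ u, ω ∅ u = 0) :
    sInf {w | ∃ π : S → U,
        w = wC π + ∑ u, ω (Finset.univ.filter fun s => π s = u) u} =
    sInf {w | ∃ π : S → U,
        w = wC π + sInf {w' | ∃ π' : S → U, pattern π = pattern π' ∧
          w' = ∑ u, ω (Finset.univ.filter fun s => π' s = u) u}} := by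
  classical
  set wA : (S → U) → ℕ := fun π => ∑ u, ω (Finset.univ.filter fun s => π s = u) u with hwA
  have hwCeq : ∀ {π π' : S → U}, pattern π = pattern π' → wC π = wC π' := by
    intro π π' h
    obtain ⟨θ, rfl⟩ := exists_perm_of_pattern_eq h
    exact (hUI θ π).symm
  -- the existence of some plan
  obtain ⟨f⟩ := Function.Embedding.nonempty_of_card_le hcard
  have hAne : {w | ∃ π : S → U, w = wC π + wA π}.Nonempty :=
    ⟨wC f + wA f, f, rfl⟩
  have hBne : {w | ∃ π : S → U, w = wC π + sInf {w' | ∃ π' : S → U,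
      pattern π = pattern π' ∧ w' = wA π'}}.Nonempty :=
    ⟨_, f, rfl⟩
  apply le_antisymm
  · -- sInf A ≤ sInf B
    obtain ⟨π, hb⟩ := Nat.sInf_mem hBne
    rw [hb]
    have hinner_ne : {w' | ∃ π' : S → U, pattern π = pattern π' ∧ w' = wA π'}.Nonempty :=
      ⟨wA π, π, rfl, rfl⟩
    obtain ⟨π', hpat, hval⟩ := Nat.sInf_mem hinner_ne
    rw [hval, hwCeq hpat]
    exact Nat.sInf_le ⟨π', rfl⟩
  · -- sInf B ≤ sInf A
    obtain ⟨π, ha⟩ := Nat.sInf_mem hAne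
    rw [ha]
    calc sInf {w | ∃ π : S → U, w = wC π + sInf {w' | ∃ π' : S → U,
          pattern π = pattern π' ∧ w' = wA π'}}
        ≤ wC π + sInf {w' | ∃ π' : S → U, pattern π = pattern π' ∧ w' = wA π'} :=
          Nat.sInf_le ⟨π, rfl⟩
      _ ≤ wC π + wA π := by
          gcongr
          exact Nat.sInf_le ⟨π, rfl, rfl⟩
end

section
/- Let c be a counting constraint with scope T and weight w_c(π) = ω_c(|π(T)|), and let P be a pattern (partition of a subset T(P) ⊆ S). Define q = |{p ∈ P : p ∩ T ≠ ∅}| and a = |T ∩ T(P)|, and define recursively l(q, a) = ω_c(q) if a = |T| and l(q, a) = min{l(q, a+1), l(q+1, a+1)} otherwise. Then for every complete plan π extending some plan with pattern P (i.e., whose pattern restricted to T(P) refines to P), w_c(π) ≥ l(q, a). -/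
/-- The recursive lower-bound function `l(q, a)` for a counting constraint with
scope of cardinality `tT`. -/
def lb (ω : ℕ → ℕ) (tT q a : ℕ) : ℕ :=
  if h : tT ≤ a then ω q else min (lb ω tT q (a + 1)) (lb ω tT (q + 1) (a + 1))
termination_by tT - a
decreasing_by all_goals omega

lemma lb_le_of_le (ω : ℕ → ℕ) (tT : ℕ) :
    ∀ n a q m, tT - a ≤ n → q ≤ m → m ≤ q + (tT - a) → lb ω tT q a ≤ ω m := by
  intro n
  induction n with
  | zero =>
    intro a q m h1 h2 h3
    rw [lb, dif_pos (by omega : tT ≤ a)]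
    have : q = m := by omega
    rw [this]
  | succ n ih =>
    intro a q m h1 h2 h3
    by_cases h : tT ≤ a
    · rw [lb, dif_pos h]
      have : q = m := by omega
      rw [this]
    · rw [lb, dif_neg h]
      by_cases hm : m ≤ q + (tT - (a + 1))
      · exact le_trans (min_le_left _ _) (ih (a + 1) q m (by omega) h2 hm)
      · exact le_trans (min_le_right _ _) (ih (a + 1) (q + 1) m (by omega) (by omega) (by omega))

/-- `l(q, a)` is a lower bound on the weight of any complete plan
extending a plan with pattern `P`, where `q` is the number of blocks of `P`
meeting the scope `T` and `a = |T ∩ T(P)|`. -/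
theorem lb_le_weight_of_extension {S U : Type*} [Fintype S] [Fintype U]
    [DecidableEq S] [DecidableEq U]
    (hU : Fintype.card S ≤ Fintype.card U)
    (T : Finset S) (ω : ℕ → ℕ)
    (P : Finset (Finset S))
    (hne : ∀ b ∈ P, b.Nonempty)
    (hdisj : ∀ b ∈ P, ∀ b' ∈ P, b ≠ b' → Disjoint b b')
    (π : S → U)
    (hext : ∀ s ∈ P.biUnion id, ∀ t ∈ P.biUnion id,
      ((∃ b ∈ P, s ∈ b ∧ t ∈ b) ↔ π s = π t)) :
    lb ω T.card ((P.filter fun b => (b ∩ T).Nonempty).card) ((T ∩ P.biUnion id).card)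
      ≤ ω ((T.image π).card) := by
  classical
  rcases isEmpty_or_nonempty S with hS | hS
  · have hT : T = ∅ := Finset.eq_empty_of_isEmpty T
    have hP : P = ∅ := by
      ext b
      simp only [Finset.notMem_empty, iff_false]
      intro hb
      obtain ⟨x, _⟩ := hne b hb
      exact (hS.false x).elim
    subst hT; subst hP
    simp [lb]
  · have : Inhabited S := Classical.inhabited_of_nonempty hS
    set B := P.biUnion id with hB
    set Q := P.filter fun b => (b ∩ T).Nonempty with hQ
    -- representative of a block
    set rep : Finset S → S := fun b => if h : (b ∩ T).Nonempty then h.choose else default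
      with hrep
    have hrep_mem : ∀ b ∈ Q, rep b ∈ b ∩ T := by
      intro b hb
      have h : (b ∩ T).Nonempty := (Finset.mem_filter.mp hb).2
      simp only [hrep, dif_pos h]
      exact h.choose_spec
    -- π is constant on blocks
    have hconst : ∀ b ∈ P, ∀ s ∈ b, ∀ t ∈ b, π s = π t := by
      intro b hb s hs t ht
      have hsB : s ∈ B := Finset.mem_biUnion.mpr ⟨b, hb, hs⟩
      have htB : t ∈ B := Finset.mem_biUnion.mpr ⟨b, hb, ht⟩
      exact (hext s hsB t htB).mp ⟨b, hb, hs, ht⟩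
    -- distinct blocks get distinct π-values
    have hinj : Set.InjOn (fun b => π (rep b)) Q := by
      intro b hb b' hb' heq
      have hbP : b ∈ P := (Finset.mem_filter.mp hb).1
      have hb'P : b' ∈ P := (Finset.mem_filter.mp hb').1
      have h1 := hrep_mem b hb
      have h2 := hrep_mem b' hb'
      have hmb : rep b ∈ b := (Finset.mem_inter.mp h1).1
      have hmb' : rep b' ∈ b' := (Finset.mem_inter.mp h2).1
      have hBm : rep b ∈ B := Finset.mem_biUnion.mpr ⟨b, hbP, hmb⟩
      have hBm' : rep b' ∈ B := Finset.mem_biUnion.mpr ⟨b', hb'P, hmb'⟩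
      obtain ⟨c, hcP, hc1, hc2⟩ := (hext (rep b) hBm (rep b') hBm').mpr heq
      have hcb : c = b := by
        by_contra hne'
        exact (Finset.disjoint_left.mp (hdisj c hcP b hbP hne')) hc1 hmb
      have hcb' : c = b' := by
        by_contra hne'
        exact (Finset.disjoint_left.mp (hdisj c hcP b' hb'P hne')) hc2 hmb'
      rw [← hcb, ← hcb']
    -- lower bound: q ≤ |π(T)|
    have hlow : Q.card ≤ (T.image π).card := by
      apply Finset.card_le_card_of_injOn (fun b => π (rep b))
      · intro b hb
        have h := hrep_mem b hb
        exact Finset.mem_image.mpr ⟨rep b, (Finset.mem_inter.mp h).2, rfl⟩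
      · exact hinj
    -- upper bound pieces
    have himg1 : (T ∩ B).image π ⊆ Q.image (fun b => π (rep b)) := by
      intro u hu
      obtain ⟨s, hs, rfl⟩ := Finset.mem_image.mp hu
      have hsT : s ∈ T := (Finset.mem_inter.mp hs).1
      have hsB : s ∈ B := (Finset.mem_inter.mp hs).2
      obtain ⟨b, hbP, hsb⟩ := Finset.mem_biUnion.mp hsB
      have hbQ : b ∈ Q := Finset.mem_filter.mpr ⟨hbP, ⟨s, Finset.mem_inter.mpr ⟨hsb, hsT⟩⟩⟩
      have h := hrep_mem b hbQ
      have : π s = π (rep b) := hconst b hbP s hsb (rep b) (Finset.mem_inter.mp h).1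
      rw [this]
      exact Finset.mem_image.mpr ⟨b, hbQ, rfl⟩
    have hupper : (T.image π).card ≤ Q.card + (T \ B).card := by
      have hTsplit : T = (T ∩ B) ∪ (T \ B) := by ext x; by_cases hx : x ∈ B <;> simp [hx]
      calc (T.image π).card = (((T ∩ B) ∪ (T \ B)).image π).card := by rw [← hTsplit]
        _ = ((T ∩ B).image π ∪ (T \ B).image π).card := by rw [Finset.image_union]
        _ ≤ ((T ∩ B).image π).card + ((T \ B).image π).card := Finset.card_union_le _ _
        _ ≤ Q.card + (T \ B).card := by
            gcongr
            · exact le_trans (Finset.card_le_card himg1) Finset.card_image_le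
            · exact Finset.card_image_le
    have hcards : (T ∩ B).card + (T \ B).card = T.card := Finset.card_inter_add_card_sdiff T B
    have ha : (T ∩ B).card ≤ T.card := Finset.card_le_card (Finset.inter_subset_left)
    exact lb_le_of_le ω T.card (T.card - (T ∩ B).card) (T ∩ B).card Q.card _
      (by omega) hlow (by omega)
end
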